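/- For every integer k ≥ 1, the 3-uniform hypergraph Γ_n on n = 4k + 2 vertices is 2-subset-regular with 2-valence 2k; that is, every 2-element subset of its vertex set is contained in exactly 2k edges. -/

import Mathlib

open scoped Classical

/-- The vertex set of the hypergraph `Γ_n`, `n = 4k + 2`: two copies of `ZMod (2k+1)`,
the second coordinate indicating the copy (so `(a, i)` stands for `a_i`). -/
abbrev GammaVertex (k : ℕ) := ZMod (2 * k + 1) × Fin 2

/-- `E1`: all 3-element subsets of the first copy of `ZMod (2k+1)`. -/
def GammaE1 (k : ℕ) (e : Finset (GammaVertex k)) : Prop :=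
  ∃ a b c : ZMod (2 * k + 1), a ≠ b ∧ a ≠ c ∧ b ≠ c ∧
    e = {(a, 0), (b, 0), (c, 0)}

/-- `E2`: triples `{a₀, b₀, c₁}` with `a ≠ b` and `2c = a + b` in `ZMod (2k+1)`. -/
def GammaE2 (k : ℕ) (e : Finset (GammaVertex k)) : Prop :=
  ∃ a b c : ZMod (2 * k + 1), a ≠ b ∧ 2 * c = a + b ∧
    e = {(a, 0), (b, 0), (c, 1)}

/-- `E3`: triples `{a₀, b₁, c₁}` with `b ≠ c` and `2a ≠ b + c` in `ZMod (2k+1)`. -/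
def GammaE3 (k : ℕ) (e : Finset (GammaVertex k)) : Prop :=
  ∃ a b c : ZMod (2 * k + 1), b ≠ c ∧ 2 * a ≠ b + c ∧
    e = {(a, 0), (b, 1), (c, 1)}

/-- The edge predicate of the 3-uniform hypergraph `Γ_n` on `n = 4k + 2` vertices. -/
def GammaEdge (k : ℕ) (e : Finset (GammaVertex k)) : Prop :=
  GammaE1 k e ∨ GammaE2 k e ∨ GammaE3 k e

open Finset

lemma aux_f01 : (0 : Fin 2) ≠ 1 := by decide
lemma aux_f10 : (1 : Fin 2) ≠ 0 := by decide

lemma aux_char00 (k : ℕ) (a b x : ZMod (2*k+1)) (hab : a ≠ b) (m : Fin 2) :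
    ((x,m) ∉ ({(a,0),(b,0)} : Finset (GammaVertex k)) ∧
      GammaEdge k (insert (x,m) {(a,0),(b,0)})) ↔
    ((m = 0 ∧ x ≠ a ∧ x ≠ b) ∨ (m = 1 ∧ 2*x = a + b)) := by
  constructor
  · rintro ⟨hv, h | h | h⟩
    · -- E1
      obtain ⟨a', b', c', h1, h2, h3, E⟩ := h
      have hx : ((x, m) : GammaVertex k) ∈ ({(a', 0), (b', 0), (c', 0)} : Finset (GammaVertex k)) := by
        rw [← E]; simp
      simp only [mem_insert, mem_singleton, Prod.mk.injEq] at hx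
      have hm : m = 0 := by tauto
      subst hm
      simp only [mem_insert, mem_singleton, Prod.mk.injEq, and_true, not_or] at hv
      exact Or.inl ⟨rfl, hv.1, hv.2⟩
    · -- E2
      obtain ⟨a', b', c', hab', hsum, E⟩ := h
      have ha : ((a, (0:Fin 2)) : GammaVertex k) ∈ ({(a', 0), (b', 0), (c', 1)} : Finset (GammaVertex k)) := by
        rw [← E]; simp
      have hb : ((b, (0:Fin 2)) : GammaVertex k) ∈ ({(a', 0), (b', 0), (c', 1)} : Finset (GammaVertex k)) := by
        rw [← E]; simp
      have hx : ((x, m) : GammaVertex k) ∈ ({(a', 0), (b', 0), (c', 1)} : Finset (GammaVertex k)) := by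
        rw [← E]; simp
      simp only [mem_insert, mem_singleton, Prod.mk.injEq, aux_f01, and_true, and_false, or_false] at ha hb
      simp only [mem_insert, mem_singleton, Prod.mk.injEq, not_or, and_true] at hv
      simp only [mem_insert, mem_singleton, Prod.mk.injEq] at hx
      rcases hx with ⟨hx1, hm⟩ | ⟨hx1, hm⟩ | ⟨hx1, hm⟩
      · subst hm hx1
        -- x = a', m = 0 : contradiction
        exfalso
        rcases ha with rfl | rfl
        · exact hv.1 ⟨rfl, rfl⟩
        · rcases hb with rfl | rfl
          · exact hv.2 ⟨rfl, rfl⟩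
          · exact hab rfl
      · subst hm hx1
        exfalso
        rcases hb with rfl | rfl
        · rcases ha with rfl | rfl
          · exact hab rfl
          · exact hv.1 ⟨rfl, rfl⟩
        · exact hv.2 ⟨rfl, rfl⟩
      · subst hm hx1
        refine Or.inr ⟨rfl, ?_⟩
        rw [hsum]
        rcases ha with rfl | rfl <;> rcases hb with rfl | rfl
        · exact absurd rfl hab
        · rfl
        · exact add_comm _ _
        · exact absurd rfl hab
    · -- E3
      obtain ⟨a', b', c', hbc', hne, E⟩ := h
      exfalso
      have ha : ((a, (0:Fin 2)) : GammaVertex k) ∈ ({(a', 0), (b', 1), (c', 1)} : Finset (GammaVertex k)) := by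
        rw [← E]; simp
      have hb : ((b, (0:Fin 2)) : GammaVertex k) ∈ ({(a', 0), (b', 1), (c', 1)} : Finset (GammaVertex k)) := by
        rw [← E]; simp
      simp only [mem_insert, mem_singleton, Prod.mk.injEq, aux_f01, and_true, and_false, or_false] at ha hb
      exact hab (ha.trans hb.symm)
  · rintro (⟨rfl, hxa, hxb⟩ | ⟨rfl, hsum⟩)
    · refine ⟨by simp [Prod.mk.injEq, hxa, hxb], Or.inl ⟨x, a, b, hxa, hxb, hab, rfl⟩⟩
    · refine ⟨by simp [Prod.mk.injEq, aux_f10], Or.inr (Or.inl ⟨a, b, x, hab, hsum.symm ▸ rfl, ?_⟩)⟩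
      ext v; simp [mem_insert, mem_singleton]; tauto


lemma aux_char01 (k : ℕ) (a b x : ZMod (2*k+1)) (m : Fin 2) :
    ((x,m) ∉ ({(a,0),(b,1)} : Finset (GammaVertex k)) ∧
      GammaEdge k (insert (x,m) {(a,0),(b,1)})) ↔
    ((m = 0 ∧ x ≠ a ∧ 2*b = a + x) ∨ (m = 1 ∧ x ≠ b ∧ 2*a ≠ b + x)) := by
  constructor
  · rintro ⟨hv, h | h | h⟩
    · -- E1 : impossible, (b,1) has coord 1
      obtain ⟨a', b', c', h1, h2, h3, E⟩ := h
      exfalso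
      have hb : ((b, (1:Fin 2)) : GammaVertex k) ∈ ({(a', 0), (b', 0), (c', 0)} : Finset (GammaVertex k)) := by
        rw [← E]; simp
      simp only [mem_insert, mem_singleton, Prod.mk.injEq, aux_f10, and_false, or_self] at hb
    · -- E2
      obtain ⟨a', b', c', hab', hsum, E⟩ := h
      have ha : ((a, (0:Fin 2)) : GammaVertex k) ∈ ({(a', 0), (b', 0), (c', 1)} : Finset (GammaVertex k)) := by
        rw [← E]; simp
      have hb : ((b, (1:Fin 2)) : GammaVertex k) ∈ ({(a', 0), (b', 0), (c', 1)} : Finset (GammaVertex k)) := by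
        rw [← E]; simp
      have hx : ((x, m) : GammaVertex k) ∈ ({(a', 0), (b', 0), (c', 1)} : Finset (GammaVertex k)) := by
        rw [← E]; simp
      simp only [mem_insert, mem_singleton, Prod.mk.injEq, aux_f01, aux_f10, and_true,
        and_false, or_false, false_or] at ha hb
      simp only [mem_insert, mem_singleton, Prod.mk.injEq, not_or] at hv
      simp only [mem_insert, mem_singleton, Prod.mk.injEq] at hx
      subst hb
      rcases hx with ⟨hx1, hm⟩ | ⟨hx1, hm⟩ | ⟨hx1, hm⟩
      · subst hm hx1
        refine Or.inl ⟨rfl, fun hxa => hv.1 ⟨hxa, rfl⟩, ?_⟩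
        rcases ha with rfl | rfl
        · exact absurd ⟨rfl, rfl⟩ hv.1
        · rw [hsum]; exact add_comm x a
      · subst hm hx1
        refine Or.inl ⟨rfl, fun hxa => hv.1 ⟨hxa, rfl⟩, ?_⟩
        rcases ha with rfl | rfl
        · rw [hsum]
        · exact absurd ⟨rfl, rfl⟩ hv.1
      · subst hm hx1
        exact absurd ⟨rfl, rfl⟩ hv.2
    · -- E3
      obtain ⟨a', b', c', hbc', hne, E⟩ := h
      have ha : ((a, (0:Fin 2)) : GammaVertex k) ∈ ({(a', 0), (b', 1), (c', 1)} : Finset (GammaVertex k)) := by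
        rw [← E]; simp
      have hb : ((b, (1:Fin 2)) : GammaVertex k) ∈ ({(a', 0), (b', 1), (c', 1)} : Finset (GammaVertex k)) := by
        rw [← E]; simp
      have hx : ((x, m) : GammaVertex k) ∈ ({(a', 0), (b', 1), (c', 1)} : Finset (GammaVertex k)) := by
        rw [← E]; simp
      simp only [mem_insert, mem_singleton, Prod.mk.injEq, aux_f01, aux_f10, and_true,
        and_false, or_false, false_or] at ha hb
      simp only [mem_insert, mem_singleton, Prod.mk.injEq, not_or] at hv
      simp only [mem_insert, mem_singleton, Prod.mk.injEq] at hx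
      subst ha
      rcases hx with ⟨hx1, hm⟩ | ⟨hx1, hm⟩ | ⟨hx1, hm⟩
      · subst hm hx1
        exact absurd ⟨rfl, rfl⟩ hv.1
      · subst hm hx1
        refine Or.inr ⟨rfl, fun hxb => hv.2 ⟨hxb, rfl⟩, ?_⟩
        rcases hb with rfl | rfl
        · exact absurd ⟨rfl, rfl⟩ hv.2
        · exact fun h => hne (h.trans (add_comm b x))
      · subst hm hx1
        refine Or.inr ⟨rfl, fun hxb => hv.2 ⟨hxb, rfl⟩, ?_⟩
        rcases hb with rfl | rfl
        · exact hne
        · exact absurd ⟨rfl, rfl⟩ hv.2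
  · rintro (⟨rfl, hxa, hsum⟩ | ⟨rfl, hxb, hne⟩)
    · refine ⟨by simp [Prod.mk.injEq, hxa, aux_f01], Or.inr (Or.inl ⟨a, x, b, fun h => hxa h.symm, hsum, ?_⟩)⟩
      ext v; simp [mem_insert, mem_singleton]; tauto
    · refine ⟨by simp [Prod.mk.injEq, hxb, aux_f10], Or.inr (Or.inr ⟨a, b, x, fun h => hxb h.symm, hne, ?_⟩)⟩
      ext v; simp [mem_insert, mem_singleton]; tauto

lemma aux_char11 (k : ℕ) (a b x : ZMod (2*k+1)) (hab : a ≠ b) (m : Fin 2) :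
    ((x,m) ∉ ({(a,1),(b,1)} : Finset (GammaVertex k)) ∧
      GammaEdge k (insert (x,m) {(a,1),(b,1)})) ↔
    (m = 0 ∧ 2*x ≠ a + b) := by
  constructor
  · rintro ⟨hv, h | h | h⟩
    · obtain ⟨a', b', c', h1, h2, h3, E⟩ := h
      exfalso
      have hb : ((a, (1:Fin 2)) : GammaVertex k) ∈ ({(a', 0), (b', 0), (c', 0)} : Finset (GammaVertex k)) := by
        rw [← E]; simp
      simp only [mem_insert, mem_singleton, Prod.mk.injEq, aux_f10, and_false, or_self] at hb
    · obtain ⟨a', b', c', hab', hsum, E⟩ := h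
      exfalso
      have ha : ((a, (1:Fin 2)) : GammaVertex k) ∈ ({(a', 0), (b', 0), (c', 1)} : Finset (GammaVertex k)) := by
        rw [← E]; simp
      have hb : ((b, (1:Fin 2)) : GammaVertex k) ∈ ({(a', 0), (b', 0), (c', 1)} : Finset (GammaVertex k)) := by
        rw [← E]; simp
      simp only [mem_insert, mem_singleton, Prod.mk.injEq, aux_f10, and_true,
        and_false, or_false, false_or] at ha hb
      exact hab (ha.trans hb.symm)
    · obtain ⟨a', b', c', hbc', hne, E⟩ := h
      have ha : ((a, (1:Fin 2)) : GammaVertex k) ∈ ({(a', 0), (b', 1), (c', 1)} : Finset (GammaVertex k)) := by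
        rw [← E]; simp
      have hb : ((b, (1:Fin 2)) : GammaVertex k) ∈ ({(a', 0), (b', 1), (c', 1)} : Finset (GammaVertex k)) := by
        rw [← E]; simp
      have hx : ((x, m) : GammaVertex k) ∈ ({(a', 0), (b', 1), (c', 1)} : Finset (GammaVertex k)) := by
        rw [← E]; simp
      simp only [mem_insert, mem_singleton, Prod.mk.injEq, aux_f10, and_true,
        and_false, or_false, false_or] at ha hb
      simp only [mem_insert, mem_singleton, Prod.mk.injEq, not_or] at hv
      simp only [mem_insert, mem_singleton, Prod.mk.injEq] at hx
      rcases hx with ⟨hx1, hm⟩ | ⟨hx1, hm⟩ | ⟨hx1, hm⟩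
      · subst hm
        refine ⟨rfl, ?_⟩
        rcases ha with ha | ha <;> rcases hb with hb | hb
        · exact absurd (ha.trans hb.symm) hab
        · exact fun hcon => hne (by rw [← ha, ← hb, ← hx1]; exact hcon)
        · exact fun hcon => hne (by rw [← hb, ← ha, ← hx1]; exact hcon.trans (add_comm a b))
        · exact absurd (ha.trans hb.symm) hab
      · exfalso; subst hm
        rcases ha with ha | ha
        · exact hv.1 ⟨hx1.trans ha.symm, rfl⟩
        · rcases hb with hb | hb
          · exact hv.2 ⟨hx1.trans hb.symm, rfl⟩
          · exact hab (ha.trans hb.symm)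
      · exfalso; subst hm
        rcases ha with ha | ha
        · rcases hb with hb | hb
          · exact hab (ha.trans hb.symm)
          · exact hv.2 ⟨hx1.trans hb.symm, rfl⟩
        · exact hv.1 ⟨hx1.trans ha.symm, rfl⟩
  · rintro ⟨rfl, hne⟩
    exact ⟨by simp [Prod.mk.injEq, aux_f01], Or.inr (Or.inr ⟨x, a, b, hab, hne, rfl⟩)⟩

lemma aux_two_isUnit (k : ℕ) : IsUnit (2 : ZMod (2*k+1)) := by
  have : NeZero (2*k+1) := ⟨by omega⟩
  rw [show (2 : ZMod (2*k+1)) = ((2:ℕ) : ZMod (2*k+1)) by norm_num,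
    ZMod.isUnit_iff_coprime, Nat.coprime_two_left]
  exact ⟨k, by ring⟩

lemma aux_cancel2 {k : ℕ} {x y : ZMod (2*k+1)} (h : 2*x = 2*y) : x = y :=
  (aux_two_isUnit k).mul_left_cancel h

lemma aux_card_univ (k : ℕ) : (univ : Finset (ZMod (2*k+1))).card = 2*k+1 := by
  have : NeZero (2*k+1) := ⟨by omega⟩
  simp [ZMod.card]

-- count of {x | 2x = t} is 1
lemma aux_count_linear (k : ℕ) (t : ZMod (2*k+1)) :
    (univ.filter (fun x : ZMod (2*k+1) => 2*x = t)).card = 1 := by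
  obtain ⟨u, hu⟩ := aux_two_isUnit k
  rw [Finset.card_eq_one]
  refine ⟨↑u⁻¹ * t, ?_⟩
  ext x
  simp only [mem_filter, mem_univ, true_and, mem_singleton]
  constructor
  · rintro rfl; rw [← hu, Units.inv_mul_cancel_left]
  · rintro rfl; rw [← hu, Units.mul_inv_cancel_left]

lemma aux_count_ne_one (k : ℕ) (a : ZMod (2*k+1)) :
    (univ.filter (fun x : ZMod (2*k+1) => x ≠ a)).card = 2*k := by
  have h : (univ.filter (fun x : ZMod (2*k+1) => x ≠ a)) = univ \ {a} := by
    ext x; simp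
  rw [h, card_sdiff_of_subset (by simp), aux_card_univ]; simp

lemma aux_count_ne_two (k : ℕ) (a b : ZMod (2*k+1)) (hab : a ≠ b) :
    (univ.filter (fun x : ZMod (2*k+1) => x ≠ a ∧ x ≠ b)).card = 2*k - 1 := by
  have h : (univ.filter (fun x : ZMod (2*k+1) => x ≠ a ∧ x ≠ b)) = univ \ {a, b} := by
    ext x; simp [not_or]
  rw [h, card_sdiff_of_subset (by simp), aux_card_univ, card_pair hab]; omega


lemma aux_edge_card {k : ℕ} {e : Finset (GammaVertex k)} (h : GammaEdge k e) : e.card = 3 := by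
  rcases h with ⟨a,b,c,h1,h2,h3,rfl⟩ | ⟨a,b,c,h1,h2,rfl⟩ | ⟨a,b,c,h1,h2,rfl⟩
  · exact Finset.card_eq_three.mpr ⟨_,_,_, by simp [Prod.mk.injEq, h1],
      by simp [Prod.mk.injEq, h2], by simp [Prod.mk.injEq, h3], rfl⟩
  · exact Finset.card_eq_three.mpr ⟨_,_,_, by simp [Prod.mk.injEq, h1],
      by simp [Prod.mk.injEq, aux_f01], by simp [Prod.mk.injEq, aux_f01], rfl⟩
  · exact Finset.card_eq_three.mpr ⟨_,_,_, by simp [Prod.mk.injEq, aux_f01],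
      by simp [Prod.mk.injEq, aux_f01], by simp [Prod.mk.injEq, h1], rfl⟩

lemma aux_bij (k : ℕ) (s : Finset (GammaVertex k)) (hs : s.card = 2) :
    (univ.filter (fun e : Finset (GammaVertex k) => GammaEdge k e ∧ s ⊆ e)).card
      = (univ.filter (fun v : GammaVertex k => v ∉ s ∧ GammaEdge k (insert v s))).card := by
  symm
  apply Finset.card_bij (fun v _ => insert v s)
  · intro v hv
    simp only [mem_filter, mem_univ, true_and] at hv ⊢
    exact ⟨hv.2, subset_insert _ _⟩
  · intro v hv w hw h
    simp only [mem_filter, mem_univ, true_and] at hv hw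
    have hmem : v ∈ insert w s := h ▸ mem_insert_self v s
    rcases mem_insert.mp hmem with h' | h'
    · exact h'
    · exact absurd h' hv.1
  · intro e he
    simp only [mem_filter, mem_univ, true_and] at he
    obtain ⟨hedge, hsub⟩ := he
    have hc : (e \ s).card = 1 := by
      rw [card_sdiff_of_subset hsub, aux_edge_card hedge, hs]
    obtain ⟨v, hv⟩ := Finset.card_eq_one.mp hc
    have hvmem : v ∈ e \ s := hv ▸ mem_singleton_self v
    have he' : e = insert v s := by
      apply Finset.Subset.antisymm
      · intro x hx
        by_cases hxs : x ∈ s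
        · exact mem_insert_of_mem hxs
        · have hx' : x ∈ e \ s := mem_sdiff.mpr ⟨hx, hxs⟩
          rw [hv, mem_singleton] at hx'
          exact mem_insert.mpr (Or.inl hx')
      · exact insert_subset (mem_sdiff.mp hvmem).1 hsub
    refine ⟨v, ?_, he'.symm⟩
    simp only [mem_filter, mem_univ, true_and]
    exact ⟨(mem_sdiff.mp hvmem).2, he' ▸ hedge⟩

lemma aux_countA (k : ℕ) (hk : 1 ≤ k) (a b : ZMod (2*k+1)) (hab : a ≠ b) :
    (univ.filter (fun v : GammaVertex k =>
      v ∉ ({(a,0),(b,0)} : Finset (GammaVertex k)) ∧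
      GammaEdge k (insert v {(a,0),(b,0)}))).card = 2*k := by
  have hchar := fun x m => aux_char00 k a b x hab m
  rw [Finset.card_filter, Fintype.sum_prod_type]
  simp only [Fin.sum_univ_two, hchar, aux_f01, aux_f10]
  simp only [true_and, false_and, and_false, or_false, false_or, if_true, if_false]
  rw [Finset.sum_add_distrib, ← Finset.card_filter, ← Finset.card_filter,
    aux_count_ne_two k a b hab, aux_count_linear k (a+b)]
  omega

lemma aux_countB (k : ℕ) (hk : 1 ≤ k) (a b : ZMod (2*k+1)) :
    (univ.filter (fun v : GammaVertex k =>
      v ∉ ({(a,0),(b,1)} : Finset (GammaVertex k)) ∧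
      GammaEdge k (insert v {(a,0),(b,1)}))).card = 2*k := by
  have hchar := fun x m => aux_char01 k a b x m
  rw [Finset.card_filter, Fintype.sum_prod_type]
  simp only [Fin.sum_univ_two, hchar, aux_f01, aux_f10]
  simp only [true_and, false_and, and_false, or_false, false_or, if_true, if_false]
  rw [Finset.sum_add_distrib, ← Finset.card_filter, ← Finset.card_filter]
  by_cases hab : a = b
  · subst hab
    have h1 : (univ.filter (fun x : ZMod (2*k+1) => x ≠ a ∧ 2*a = a + x)) = ∅ := by
      ext x
      simp only [mem_filter, mem_univ, true_and, Finset.notMem_empty, iff_false, not_and]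
      intro hxa hcon
      exact hxa (add_left_cancel ((two_mul a).symm.trans hcon)).symm
    have h2 : (univ.filter (fun x : ZMod (2*k+1) => x ≠ a ∧ 2*a ≠ a + x))
        = (univ.filter (fun x : ZMod (2*k+1) => x ≠ a)) := by
      apply Finset.filter_congr
      intro x _
      constructor
      · exact fun h => h.1
      · exact fun h => ⟨h, fun hcon => h (add_left_cancel ((two_mul a).symm.trans hcon)).symm⟩
    rw [h1, h2, aux_count_ne_one]
    simp
  · have h1 : (univ.filter (fun x : ZMod (2*k+1) => x ≠ a ∧ 2*b = a + x)).card = 1 := by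
      rw [Finset.card_eq_one]
      refine ⟨2*b - a, ?_⟩
      ext x
      simp only [mem_filter, mem_univ, true_and, mem_singleton]
      constructor
      · rintro ⟨hxa, hsum⟩
        linear_combination -hsum
      · rintro rfl
        constructor
        · intro hcon
          apply hab
          apply aux_cancel2
          linear_combination -hcon
        · ring
    have h2 : (univ.filter (fun x : ZMod (2*k+1) => x ≠ b ∧ 2*a ≠ b + x)).card = 2*k - 1 := by
      have hre : (univ.filter (fun x : ZMod (2*k+1) => x ≠ b ∧ 2*a ≠ b + x))
          = (univ.filter (fun x : ZMod (2*k+1) => x ≠ b ∧ x ≠ 2*a - b)) := by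
        apply Finset.filter_congr
        intro x _
        have : (2*a ≠ b + x) ↔ (x ≠ 2*a - b) := by
          constructor
          · intro h hcon
            exact h (by rw [hcon]; ring)
          · intro h hcon
            exact h (by linear_combination -hcon)
        rw [this]
      rw [hre]
      apply aux_count_ne_two
      intro hcon
      apply hab
      apply aux_cancel2
      linear_combination -hcon
    rw [h1, h2]
    omega

lemma aux_countC (k : ℕ) (hk : 1 ≤ k) (a b : ZMod (2*k+1)) (hab : a ≠ b) :
    (univ.filter (fun v : GammaVertex k =>
      v ∉ ({(a,1),(b,1)} : Finset (GammaVertex k)) ∧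
      GammaEdge k (insert v {(a,1),(b,1)}))).card = 2*k := by
  have hchar := fun x m => aux_char11 k a b x hab m
  rw [Finset.card_filter, Fintype.sum_prod_type]
  simp only [Fin.sum_univ_two, hchar, aux_f01, aux_f10]
  simp only [true_and, false_and, and_false, or_false, false_or, if_true, if_false,
    Finset.sum_const_zero, add_zero]
  rw [← Finset.card_filter]
  have h1 : (univ.filter (fun x : ZMod (2*k+1) => 2*x ≠ a + b))
      = univ \ (univ.filter (fun x : ZMod (2*k+1) => 2*x = a + b)) := by
    rw [← Finset.filter_not]
  rw [h1, card_sdiff_of_subset (Finset.filter_subset _ _), aux_count_linear k (a+b), aux_card_univ]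
  omega


/-- For every integer `k ≥ 1`, the 3-uniform hypergraph `Γ_n` on `n = 4k + 2`
vertices is 2-subset-regular with 2-valence `2k`: every 2-element subset of
its vertex set is contained in exactly `2k` edges. -/
theorem gamma_two_subset_regular (k : ℕ) (hk : 1 ≤ k)
    (s : Finset (GammaVertex k)) (hs : s.card = 2) :
    (Finset.univ.filter (fun e : Finset (GammaVertex k) =>
      GammaEdge k e ∧ s ⊆ e)).card = 2 * k := by
  obtain ⟨p, q, hpq, rfl⟩ := Finset.card_eq_two.mp hs
  rw [aux_bij k _ (Finset.card_pair hpq)]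
  obtain ⟨a, i⟩ := p
  obtain ⟨b, j⟩ := q
  fin_cases i <;> fin_cases j
  · exact aux_countA k hk a b (fun h => hpq (by rw [h]))
  · exact aux_countB k hk a b
  · simp only [Fin.mk_one, Fin.zero_eta,
      Finset.pair_comm ((a,1) : GammaVertex k) ((b,0) : GammaVertex k)]
    exact aux_countB k hk b a
  · exact aux_countC k hk a b (fun h => hpq (by rw [h]))
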